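/- Ackermann's encoding f, defined recursively on hereditarily finite sets by f(∅) = 0 and f(x) = Σ_{a ∈ x} 2^{f(a)}, is a bijection from the class of hereditarily finite sets to ℕ. -/

import Mathlib

/-- A ZFC set is hereditarily finite if it is finite and all its members are
hereditarily finite. -/
def HFSet (x : ZFSet) : Prop := ZFSet.Hereditarily (fun y => y.toSet.Finite) x

theorem ZFSet.mem_toSet (a u : ZFSet) : a ∈ u.toSet ↔ a ∈ u := Iff.rfl

theorem ZFSet.toSet_empty : (∅ : ZFSet).toSet = ∅ := by
  ext y; simp [ZFSet.mem_toSet]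

lemma HFSet.empty : HFSet ∅ := by
  rw [HFSet, ZFSet.hereditarily_iff]
  exact ⟨by simp [ZFSet.toSet_empty], fun y hy => absurd hy (ZFSet.notMem_empty y)⟩

/-- Fold a list of ZFC sets into a ZFC set with exactly those members. -/
def listToZF : List ZFSet → ZFSet
  | [] => ∅
  | a :: l => insert a (listToZF l)

lemma mem_listToZF {y : ZFSet} : ∀ {l : List ZFSet}, y ∈ listToZF l ↔ y ∈ l
  | [] => by simp [listToZF, ZFSet.notMem_empty]
  | a :: l => by simp [listToZF, ZFSet.mem_insert_iff, mem_listToZF (l := l)]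

lemma hf_listToZF {l : List ZFSet} (h : ∀ y ∈ l, HFSet y) : HFSet (listToZF l) := by
  rw [HFSet, ZFSet.hereditarily_iff]
  constructor
  · have : (listToZF l).toSet = {y | y ∈ l} := by
      ext y; simp [ZFSet.mem_toSet, mem_listToZF]
    rw [this]
    exact l.finite_toSet
  · intro y hy
    exact h y (mem_listToZF.1 hy)

/-- Every hereditarily finite set has a `Finset` of (HF) members. -/
lemma exists_member_finset (x : {x : ZFSet // HFSet x}) :
    ∃ s : Finset {x : ZFSet // HFSet x},
      ∀ y : {x : ZFSet // HFSet x}, y ∈ s ↔ (y : ZFSet) ∈ (x : ZFSet) := by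
  have hfin : (x : ZFSet).toSet.Finite := x.2.self
  classical
  refine ⟨hfin.toFinset.attach.map
    ⟨fun a => ⟨a.1, x.2.mem (by simpa [ZFSet.mem_toSet] using hfin.mem_toFinset.1 a.2)⟩,
      fun a b hab => Subtype.ext (by simpa using congrArg Subtype.val hab)⟩, fun y => ?_⟩
  simp only [Finset.mem_map, Finset.mem_attach, true_and, Function.Embedding.coeFn_mk]
  constructor
  · rintro ⟨a, rfl⟩
    exact hfin.mem_toFinset.1 a.2
  · intro hy
    exact ⟨⟨y.1, hfin.mem_toFinset.2 (ZFSet.mem_toSet _ _ |>.2 hy)⟩, rfl⟩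

theorem ackermann_exists_unique (f : {x : ZFSet // HFSet x} → ℕ)
    (hf : ∀ (x : {x : ZFSet // HFSet x}) (s : Finset {x : ZFSet // HFSet x}),
      (∀ y : {x : ZFSet // HFSet x}, y ∈ s ↔ (y : ZFSet) ∈ (x : ZFSet)) →
      f x = ∑ a ∈ s, 2 ^ f a) :
    ∀ n : ℕ, ∃! x, f x = n := by
  intro n
  induction n using Nat.strong_induction_on with
  | _ n ih =>
  classical
  -- every member's value is smaller
  have hlt : ∀ (x : {x : ZFSet // HFSet x}) (s : Finset {x : ZFSet // HFSet x}),
      (∀ y, y ∈ s ↔ (y : ZFSet) ∈ (x : ZFSet)) → f x = n →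
      ∀ a ∈ s, f a < n := by
    intro x s hs hx a ha
    have h1 : 2 ^ f a ≤ n := by
      rw [← hx, hf x s hs]
      exact Finset.single_le_sum (f := fun a => 2 ^ f a) (fun b _ => Nat.zero_le _) ha
    exact lt_of_lt_of_le Nat.lt_two_pow_self h1
  -- the image of the member finset is the set of bit indices of n
  have himg : ∀ (x : {x : ZFSet // HFSet x}) (s : Finset {x : ZFSet // HFSet x}),
      (∀ y, y ∈ s ↔ (y : ZFSet) ∈ (x : ZFSet)) → f x = n →
      s.image f = n.bitIndices.toFinset := by
    intro x s hs hx
    have hinj : ∀ a ∈ s, ∀ b ∈ s, f a = f b → a = b := by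
      intro a ha b hb hab
      obtain ⟨w, -, hw⟩ := ih (f a) (hlt x s hs hx a ha)
      rw [hw a rfl, hw b hab.symm]
    have : n = ∑ m ∈ s.image f, 2 ^ m := by
      rw [Finset.sum_image hinj, ← hf x s hs, hx]
    rw [this, Finset.toFinset_bitIndices_twoPowSum]
  -- uniqueness between any two preimages of n
  have huniq : ∀ x y, f x = n → f y = n → x = y := by
    intro x y hx hy
    obtain ⟨s, hs⟩ := exists_member_finset x
    obtain ⟨t, ht⟩ := exists_member_finset y
    have hst : s.image f = t.image f := by
      rw [himg x s hs hx, himg y t ht hy]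
    have key : ∀ (u v : {x : ZFSet // HFSet x}) (su tv : Finset {x : ZFSet // HFSet x}),
        (∀ w, w ∈ su ↔ (w : ZFSet) ∈ (u : ZFSet)) →
        (∀ w, w ∈ tv ↔ (w : ZFSet) ∈ (v : ZFSet)) →
        f u = n → f v = n → su.image f = tv.image f →
        ∀ z : ZFSet, z ∈ (u : ZFSet) → z ∈ (v : ZFSet) := by
      intro u v su tv hsu htv hu hv heq z hz
      -- z is HF since it's a member of u
      have hzHF : HFSet z := u.2.mem hz
      have hz' : (⟨z, hzHF⟩ : {x : ZFSet // HFSet x}) ∈ su := (hsu _).2 hz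
      have : f ⟨z, hzHF⟩ ∈ tv.image f := by
        rw [← heq]; exact Finset.mem_image_of_mem f hz'
      obtain ⟨b, hb, hbz⟩ := Finset.mem_image.1 this
      obtain ⟨w, -, hw⟩ := ih (f ⟨z, hzHF⟩) (hlt u su hsu hu _ hz')
      have : b = (⟨z, hzHF⟩ : {x : ZFSet // HFSet x}) := by
        rw [hw b hbz, hw ⟨z, hzHF⟩ rfl]
      have hb' := (htv b).1 hb
      rw [this] at hb'
      exact hb'
    apply Subtype.ext
    apply ZFSet.ext
    intro z
    exact ⟨key x y s t hs ht hx hy hst z, key y x t s ht hs hy hx hst.symm z⟩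
  -- existence
  have hmem_lt : ∀ m ∈ n.bitIndices, m < n := by
    intro m hm
    exact lt_of_lt_of_le Nat.lt_two_pow_self (Nat.two_pow_le_of_mem_bitIndices hm)
  -- choice function for bit indices
  set g : ℕ → {x : ZFSet // HFSet x} := fun m =>
    if h : m < n then (ih m h).choose else ⟨∅, HFSet.empty⟩ with hg
  have hgval : ∀ m < n, f (g m) = m := by
    intro m hm
    simp only [hg, dif_pos hm]
    exact (ih m hm).choose_spec.1
  set X : ZFSet := listToZF (n.bitIndices.map (fun m => ((g m : {x : ZFSet // HFSet x}) : ZFSet)))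
    with hX
  have hXHF : HFSet X := by
    apply hf_listToZF
    intro y hy
    obtain ⟨m, -, rfl⟩ := List.mem_map.1 hy
    exact (g m).2
  have hmemX : ∀ y : {x : ZFSet // HFSet x}, (y : ZFSet) ∈ X ↔ ∃ m ∈ n.bitIndices, g m = y := by
    intro y
    rw [hX, mem_listToZF, List.mem_map]
    constructor
    · rintro ⟨m, hm, hmy⟩; exact ⟨m, hm, Subtype.ext hmy⟩
    · rintro ⟨m, hm, rfl⟩; exact ⟨m, hm, rfl⟩
  -- the member finset of X
  have hginj : Set.InjOn (fun m => g m) n.bitIndices.toFinset := by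
    intro a ha b hb hab
    have ha' := hmem_lt a (List.mem_toFinset.1 ha)
    have hb' := hmem_lt b (List.mem_toFinset.1 hb)
    have := congrArg f hab
    rwa [hgval a ha', hgval b hb'] at this
  set sX : Finset {x : ZFSet // HFSet x} := n.bitIndices.toFinset.image (fun m => g m) with hsX
  have hsXmem : ∀ y : {x : ZFSet // HFSet x}, y ∈ sX ↔ (y : ZFSet) ∈ X := by
    intro y
    rw [hsX, Finset.mem_image, hmemX]
    simp only [List.mem_toFinset]
  have hfX : f ⟨X, hXHF⟩ = n := by
    rw [hf ⟨X, hXHF⟩ sX hsXmem, hsX, Finset.sum_image (fun a ha b hb h => hginj ha hb h)]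
    have : ∀ m ∈ n.bitIndices.toFinset, 2 ^ f (g m) = 2 ^ m := by
      intro m hm
      rw [hgval m (hmem_lt m (List.mem_toFinset.1 hm))]
    rw [Finset.sum_congr rfl this, Finset.twoPowSum_toFinset_bitIndices]
  exact ⟨⟨X, hXHF⟩, hfX, fun y hy => huniq y ⟨X, hXHF⟩ hy hfX⟩

/-- Ackermann's encoding: any `f` on hereditarily finite sets satisfying the recursion
`f x = Σ_{a ∈ x} 2 ^ f a` (where the sum ranges over a `Finset` enumerating exactly
the members of `x`) is a bijection onto `ℕ`. -/
theorem ackermann_bijective (f : {x : ZFSet // HFSet x} → ℕ)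
    (hf : ∀ (x : {x : ZFSet // HFSet x}) (s : Finset {x : ZFSet // HFSet x}),
      (∀ y : {x : ZFSet // HFSet x}, y ∈ s ↔ (y : ZFSet) ∈ (x : ZFSet)) →
      f x = ∑ a ∈ s, 2 ^ f a) :
    Function.Bijective f := by
  have h := ackermann_exists_unique f hf
  constructor
  · intro x y hxy
    obtain ⟨w, -, hw⟩ := h (f x)
    rw [hw x rfl, hw y hxy.symm]
  · intro n
    obtain ⟨x, hx, -⟩ := h n
    exact ⟨x, hx⟩
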